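/- arXiv:2203.08614 — 5 statements merged into one kernel-verified Lean document; each statement's English description precedes it below -/
import Mathlib

section
/- For every λ ∈ (0,1) and integer d ≥ 2, there exists a unique x > 0 such that Σ_{u=0}^∞ (1−λ) ∏_{v=1}^u dλ/(1 + v(d−1)λx) = 1. -/
open scoped BigOperators

/-- The term `π_u(x) = (1−λ) ∏_{v=1}^u dλ/(1 + v(d−1)λx)` (empty product = 1). -/
noncomputable def piTerm (d : ℕ) (lam x : ℝ) (u : ℕ) : ℝ :=
  (1 - lam) * ∏ v ∈ Finset.Icc 1 u, (d * lam) / (1 + (v : ℝ) * ((d : ℝ) - 1) * lam * x)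

/-- `φ(x) = Σ_{u=0}^∞ π_u(x)`. -/
noncomputable def phi (d : ℕ) (lam : ℝ) (x : ℝ) : ℝ := ∑' u : ℕ, piTerm d lam x u

section aux

variable {d : ℕ} {lam : ℝ}

lemma hd1 (hd : 2 ≤ d) : (1:ℝ) ≤ (d:ℝ) := by
  have : (2:ℝ) ≤ (d:ℝ) := by exact_mod_cast hd
  linarith

lemma denom_pos (hd : 2 ≤ d) (hl0 : 0 < lam) {x : ℝ} (hx : 0 ≤ x) (v : ℕ) :
    0 < 1 + (v : ℝ) * ((d : ℝ) - 1) * lam * x := by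
  have h1 := hd1 hd
  have : (0:ℝ) ≤ (v : ℝ) * ((d : ℝ) - 1) * lam * x := by
    apply mul_nonneg; apply mul_nonneg; apply mul_nonneg
    · positivity
    · linarith
    · linarith
    · exact hx
  linarith

lemma factor_pos (hd : 2 ≤ d) (hl0 : 0 < lam) {x : ℝ} (hx : 0 ≤ x) (v : ℕ) :
    0 < (d * lam) / (1 + (v : ℝ) * ((d : ℝ) - 1) * lam * x) := by
  have h1 := hd1 hd
  have hnum : 0 < (d:ℝ) * lam := by nlinarith
  exact div_pos hnum (denom_pos hd hl0 hx v)

lemma piTerm_pos (hd : 2 ≤ d) (hl : lam ∈ Set.Ioo (0:ℝ) 1) {x : ℝ} (hx : 0 ≤ x) (u : ℕ) :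
    0 < piTerm d lam x u := by
  unfold piTerm
  apply mul_pos (by linarith [hl.2])
  exact Finset.prod_pos fun v _ => factor_pos hd hl.1 hx v

lemma piTerm_succ (d : ℕ) (lam x : ℝ) (u : ℕ) :
    piTerm d lam x (u + 1) =
      piTerm d lam x u * ((d * lam) / (1 + ((u:ℝ) + 1) * ((d : ℝ) - 1) * lam * x)) := by
  unfold piTerm
  rw [Finset.prod_Icc_succ_top (Nat.succ_le_succ (Nat.zero_le u))]
  push_cast
  ring

lemma piTerm_anti (hd : 2 ≤ d) (hl : lam ∈ Set.Ioo (0:ℝ) 1) {x y : ℝ}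
    (hx : 0 ≤ x) (hxy : x ≤ y) (u : ℕ) :
    piTerm d lam y u ≤ piTerm d lam x u := by
  have h1 := hd1 hd
  unfold piTerm
  apply mul_le_mul_of_nonneg_left _ (by linarith [hl.2])
  apply Finset.prod_le_prod
  · intro v _; exact (factor_pos hd hl.1 (hx.trans hxy) v).le
  · intro v _
    apply div_le_div_of_nonneg_left _ (denom_pos hd hl.1 hx v) _
    · nlinarith [hl.1]
    · have : (v:ℝ) * ((d:ℝ) - 1) * lam * x ≤ (v:ℝ) * ((d:ℝ) - 1) * lam * y := by
        apply mul_le_mul_of_nonneg_left hxy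
        apply mul_nonneg (mul_nonneg (by positivity) (by linarith)) (le_of_lt hl.1)
      linarith

lemma piTerm_strict_anti_one (hd : 2 ≤ d) (hl : lam ∈ Set.Ioo (0:ℝ) 1) {x y : ℝ}
    (hx : 0 ≤ x) (hxy : x < y) :
    piTerm d lam y 1 < piTerm d lam x 1 := by
  have h1 := hd1 hd
  have h2 : (2:ℝ) ≤ (d:ℝ) := by exact_mod_cast hd
  unfold piTerm
  rw [Finset.Icc_self, Finset.prod_singleton, Finset.prod_singleton]
  apply mul_lt_mul_of_pos_left _ (by linarith [hl.2])
  have hnum : 0 < (d:ℝ) * lam := by nlinarith [hl.1]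
  apply div_lt_div_of_pos_left hnum (denom_pos hd hl.1 hx 1)
  have : ((1:ℕ):ℝ) * ((d:ℝ) - 1) * lam * x < ((1:ℕ):ℝ) * ((d:ℝ) - 1) * lam * y := by
    apply mul_lt_mul_of_pos_left hxy
    simp only [Nat.cast_one, one_mul]
    nlinarith [hl.1]
  linarith

lemma summable_piTerm (hd : 2 ≤ d) (hl : lam ∈ Set.Ioo (0:ℝ) 1) {x : ℝ} (hx : 0 < x) :
    Summable (piTerm d lam x) := by
  have h1 := hd1 hd
  obtain ⟨N, hN⟩ := exists_nat_gt ((2 * ((d:ℝ) * lam) - 1) / (((d:ℝ) - 1) * lam * x))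
  apply summable_of_ratio_norm_eventually_le (r := 1/2) (by norm_num)
  have h2 : (2:ℝ) ≤ (d:ℝ) := by exact_mod_cast hd
  have hd1x : 0 < ((d:ℝ) - 1) * lam * x :=
    mul_pos (mul_pos (by linarith) hl.1) hx
  filter_upwards [Filter.eventually_ge_atTop N] with n hn
  have hden : 0 < 1 + ((n:ℝ) + 1) * ((d:ℝ) - 1) * lam * x := by
    have hn0 : (0:ℝ) ≤ (n:ℝ) + 1 := by positivity
    nlinarith
  have hnum : 0 < (d:ℝ) * lam := by nlinarith [hl.1]
  rw [piTerm_succ, Real.norm_eq_abs, Real.norm_eq_abs,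
    abs_of_pos (piTerm_pos hd hl hx.le n),
    abs_of_pos (mul_pos (piTerm_pos hd hl hx.le n) (div_pos hnum hden))]
  rw [mul_comm (1/2 : ℝ)]
  apply mul_le_mul_of_nonneg_left _ (piTerm_pos hd hl hx.le n).le
  rw [div_le_iff₀ hden]
  have hNn : ((2 * ((d:ℝ) * lam) - 1) / (((d:ℝ) - 1) * lam * x)) < (n:ℝ) + 1 := by
    calc _ < (N:ℝ) := hN
    _ ≤ (n:ℝ) := by exact_mod_cast hn
    _ ≤ (n:ℝ) + 1 := by linarith
  rw [div_lt_iff₀ hd1x] at hNn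
  nlinarith

lemma phi_lt_one (hd : 2 ≤ d) (hl : lam ∈ Set.Ioo (0:ℝ) 1) {x : ℝ}
    (hx : (d:ℝ) / (((d:ℝ) - 1) * lam) < x) : phi d lam x < 1 := by
  have h1 := hd1 hd
  have h2 : (2:ℝ) ≤ (d:ℝ) := by exact_mod_cast hd
  have hdm : 0 < ((d:ℝ) - 1) * lam := by nlinarith [hl.1]
  have hx0 : 0 < x := lt_trans (div_pos (by linarith) hdm) hx
  set q : ℝ := (d:ℝ) / (((d:ℝ) - 1) * x) with hq
  have hq0 : 0 < q := div_pos (by linarith) (by nlinarith)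
  have hqlam : q < lam := by
    rw [hq, div_lt_iff₀ (by nlinarith : (0:ℝ) < ((d:ℝ)-1) * x)]
    rw [div_lt_iff₀ hdm] at hx
    nlinarith
  have hq1 : q < 1 := lt_trans hqlam hl.2
  have hterm : ∀ u, piTerm d lam x u ≤ (1 - lam) * q ^ u := by
    intro u
    unfold piTerm
    apply mul_le_mul_of_nonneg_left _ (by linarith [hl.2])
    calc ∏ v ∈ Finset.Icc 1 u, (d * lam) / (1 + (v : ℝ) * ((d : ℝ) - 1) * lam * x)
        ≤ ∏ _v ∈ Finset.Icc 1 u, q := by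
          apply Finset.prod_le_prod
          · intro v _; exact (factor_pos hd hl.1 hx0.le v).le
          · intro v hv
            have hv1 : 1 ≤ v := (Finset.mem_Icc.mp hv).1
            have hv1' : (1:ℝ) ≤ (v:ℝ) := by exact_mod_cast hv1
            rw [div_le_iff₀ (denom_pos hd hl.1 hx0.le v), hq, div_mul_eq_mul_div,
              le_div_iff₀ (by nlinarith : (0:ℝ) < ((d:ℝ)-1) * x)]
            have key : 0 ≤ ((v:ℝ) - 1) * (((d:ℝ) - 1) * lam * x) :=
              mul_nonneg (by linarith) (by nlinarith [hl.1])
            nlinarith [mul_nonneg (by linarith : (0:ℝ) ≤ (d:ℝ)) key]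
      _ = q ^ u := by rw [Finset.prod_const, Nat.card_Icc]; norm_num
  calc phi d lam x ≤ ∑' u : ℕ, (1 - lam) * q ^ u := by
        apply Summable.tsum_le_tsum hterm (summable_piTerm hd hl hx0)
        exact (summable_geometric_of_lt_one hq0.le hq1).mul_left _
    _ = (1 - lam) * (1 - q)⁻¹ := by
        rw [tsum_mul_left, tsum_geometric_of_lt_one hq0.le hq1]
    _ < 1 := by
        rw [← div_eq_mul_inv, div_lt_one (by linarith)]
        linarith

lemma continuousOn_piTerm (hd : 2 ≤ d) (hl : lam ∈ Set.Ioo (0:ℝ) 1) (u : ℕ) :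
    ContinuousOn (fun x => piTerm d lam x u) (Set.Ici (0:ℝ)) := by
  unfold piTerm
  apply ContinuousOn.mul continuousOn_const
  apply continuousOn_finset_prod
  intro v _
  apply ContinuousOn.div continuousOn_const
  · fun_prop
  · intro x hx
    exact ne_of_gt (denom_pos hd hl.1 hx v)

lemma exists_phi_gt_one (hd : 2 ≤ d) (hl : lam ∈ Set.Ioo (0:ℝ) 1) :
    ∃ x : ℝ, 0 < x ∧ 1 < phi d lam x := by
  have h1 := hd1 hd
  have h2 : (2:ℝ) ≤ (d:ℝ) := by exact_mod_cast hd
  obtain ⟨hl0, hl1⟩ := hl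
  set r : ℝ := min ((d:ℝ) * lam) ((1 + lam) / 2) with hr
  have hlr : lam < r := lt_min (by nlinarith) (by linarith)
  have hr0 : 0 < r := lt_trans hl0 hlr
  have hr1 : r < 1 := lt_of_le_of_lt (min_le_right _ _) (by linarith)
  obtain ⟨M, hM⟩ := exists_pow_lt_of_lt_one (x := (r - lam) / (1 - lam))
    (div_pos (by linarith) (by linarith)) hr1
  set S : ℝ → ℝ := fun x => ∑ u ∈ Finset.range M, piTerm d lam x u with hS
  have hS0 : 1 < S 0 := by
    have hpi0 : ∀ u, piTerm d lam 0 u = (1 - lam) * ((d:ℝ) * lam) ^ u := by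
      intro u
      unfold piTerm
      congr 1
      have he : ∀ v ∈ Finset.Icc 1 u,
          (d:ℝ) * lam / (1 + (v : ℝ) * ((d : ℝ) - 1) * lam * 0) = (d:ℝ) * lam := by
        intro v _; rw [mul_zero, add_zero, div_one]
      rw [Finset.prod_congr rfl he, Finset.prod_const, Nat.card_Icc]
      norm_num
    have hge : (1 - lam) * ∑ u ∈ Finset.range M, r ^ u ≤ S 0 := by
      rw [hS]
      simp only [hpi0]
      rw [← Finset.mul_sum]
      apply mul_le_mul_of_nonneg_left _ (by linarith)
      apply Finset.sum_le_sum
      intro u _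
      exact pow_le_pow_left₀ hr0.le (min_le_left _ _) u
    have hgeom : ∑ u ∈ Finset.range M, r ^ u = (1 - r ^ M) / (1 - r) := by
      rw [geom_sum_eq (ne_of_lt hr1)]
      rw [div_eq_div_iff (by linarith) (by linarith)]
      ring
    have hM' : (1 - lam) * r ^ M < r - lam := by
      rw [lt_div_iff₀ (by linarith : (0:ℝ) < 1 - lam)] at hM
      nlinarith
    have : 1 < (1 - lam) * ∑ u ∈ Finset.range M, r ^ u := by
      rw [hgeom, ← mul_div_assoc, lt_div_iff₀ (by linarith : (0:ℝ) < 1 - r)]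
      nlinarith
    linarith
  have hScont : ContinuousWithinAt S (Set.Ioi 0) 0 := by
    have : ContinuousOn S (Set.Ici (0:ℝ)) := by
      apply continuousOn_finset_sum _
      intro u _
      exact continuousOn_piTerm hd ⟨hl0, hl1⟩ u
    exact (this 0 Set.self_mem_Ici).mono Set.Ioi_subset_Ici_self
  have hev : ∀ᶠ x in nhdsWithin 0 (Set.Ioi 0), 1 < S x :=
    hScont.eventually (eventually_gt_nhds hS0)
  obtain ⟨x, hx1, hx0⟩ := (hev.and self_mem_nhdsWithin).exists
  refine ⟨x, hx0, ?_⟩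
  have : S x ≤ phi d lam x := by
    apply Summable.sum_le_tsum
    · intro u _
      exact (piTerm_pos hd ⟨hl0, hl1⟩ (le_of_lt hx0) u).le
    · exact summable_piTerm hd ⟨hl0, hl1⟩ hx0
  linarith

lemma phi_strictAnti (hd : 2 ≤ d) (hl : lam ∈ Set.Ioo (0:ℝ) 1) {x y : ℝ}
    (hx : 0 < x) (hxy : x < y) : phi d lam y < phi d lam x := by
  apply Summable.tsum_lt_tsum_of_nonneg (i := 1)
  · intro b; exact (piTerm_pos hd hl (by linarith) b).le
  · intro b; exact piTerm_anti hd hl hx.le hxy.le b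
  · exact piTerm_strict_anti_one hd hl hx.le hxy
  · exact summable_piTerm hd hl hx

end aux

theorem phi_eq_one_existsUnique (d : ℕ) (hd : 2 ≤ d) (lam : ℝ)
    (hl : lam ∈ Set.Ioo (0 : ℝ) 1) :
    ∃! x : ℝ, 0 < x ∧ phi d lam x = 1 := by
  have h1 := hd1 hd
  have h2 : (2:ℝ) ≤ (d:ℝ) := by exact_mod_cast hd
  have hdm : 0 < ((d:ℝ) - 1) * lam := by nlinarith [hl.1]
  obtain ⟨a, ha0, ha⟩ := exists_phi_gt_one hd hl
  set b : ℝ := a + (d:ℝ) / (((d:ℝ) - 1) * lam) + 1 with hb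
  have hab : a < b := by
    have : 0 < (d:ℝ) / (((d:ℝ) - 1) * lam) := div_pos (by linarith) hdm
    rw [hb]; linarith
  have hbgt : (d:ℝ) / (((d:ℝ) - 1) * lam) < b := by rw [hb]; linarith
  have hblt : phi d lam b < 1 := phi_lt_one hd hl hbgt
  have hcont : ContinuousOn (phi d lam) (Set.Icc a b) := by
    apply continuousOn_tsum (u := piTerm d lam a)
    · intro u
      exact (continuousOn_piTerm hd hl u).mono (fun x hx => le_trans ha0.le hx.1)
    · exact summable_piTerm hd hl ha0
    · intro n x hx
      rw [Real.norm_eq_abs, abs_of_pos (piTerm_pos hd hl (le_trans ha0.le hx.1) n)]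
      exact piTerm_anti hd hl ha0.le hx.1 n
  have hmem : (1:ℝ) ∈ Set.Icc (phi d lam b) (phi d lam a) := ⟨hblt.le, ha.le⟩
  obtain ⟨x, hxmem, hxval⟩ := intermediate_value_Icc' hab.le hcont hmem
  have hx0 : 0 < x := lt_of_lt_of_le ha0 hxmem.1
  refine ⟨x, ⟨hx0, hxval⟩, ?_⟩
  rintro y ⟨hy0, hyval⟩
  by_contra hne
  rcases lt_or_gt_of_ne hne with h | h
  · have := phi_strictAnti hd hl hy0 h
    rw [hyval, hxval] at this; exact lt_irrefl 1 this
  · have := phi_strictAnti hd hl hx0 h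
    rw [hyval, hxval] at this; exact lt_irrefl 1 this
end

section
/- Let d ≥ 2 be an integer and λ ∈ ((4d−2)/(4d−1), 1). Let Q̄ > 0 satisfy Σ_{u=0}^∞ ∏_{v=1}^u dλ/(1 + v(d−1)λ/Q̄) = 1/(1−λ). Then Q̄ ≤ −log(1−λ)/c_d, where c_d = ((2d−3)/(2(d−1))) · log(4d/(4d−1)). -/
set_option maxHeartbeats 800000


open scoped BigOperators

theorem meanQueue_log_bound (d : ℕ) (hd : 2 ≤ d) (lam Q : ℝ)
    (hl : lam ∈ Set.Ioo ((4 * (d : ℝ) - 2) / (4 * (d : ℝ) - 1)) 1) (hQ : 0 < Q)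
    (hfix : ∑' u : ℕ, ∏ v ∈ Finset.Icc 1 u,
        ((d : ℝ) * lam) / (1 + (v : ℝ) * ((d : ℝ) - 1) * lam / Q) = 1 / (1 - lam)) :
    Q ≤ -Real.log (1 - lam) /
      (((2 * (d : ℝ) - 3) / (2 * ((d : ℝ) - 1))) * Real.log (4 * (d : ℝ) / (4 * (d : ℝ) - 1))) := by
  obtain ⟨hl1, hl2⟩ := hl
  have hD : (2:ℝ) ≤ (d:ℝ) := by exact_mod_cast hd
  set D := (d:ℝ) with hDdef
  have hlam0 : 0 < lam := by
    refine lt_trans ?_ hl1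
    apply div_pos <;> linarith
  have hs : 0 < 1 - lam := by linarith
  -- basic quantities
  set r : ℝ := 2 * D * lam / (2 * D - 1) with hrdef
  have h2D : (0:ℝ) < 2 * D - 1 := by linarith
  have hr0 : 0 < r := by positivity
  have hlog0pos : 0 < Real.log (4 * D / (4 * D - 1)) := by
    apply Real.log_pos
    rw [lt_div_iff₀ (by linarith)]
    linarith
  have hr_ge : 4 * D / (4 * D - 1) < r := by
    rw [hrdef, div_lt_div_iff₀ (by linarith) h2D]
    rw [div_lt_iff₀ (by linarith)] at hl1
    nlinarith
  have hr1 : 1 < r := by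
    have : (1:ℝ) < 4 * D / (4 * D - 1) := by
      rw [lt_div_iff₀ (by linarith)]; linarith
    linarith
  set f : ℕ → ℝ := fun u => ∏ v ∈ Finset.Icc 1 u,
      (D * lam) / (1 + (v : ℝ) * (D - 1) * lam / Q) with hfdef
  have hfnonneg : ∀ u, 0 ≤ f u := by
    intro u
    apply Finset.prod_nonneg
    intro v hv
    have h0 : (0:ℝ) ≤ (v : ℝ) * (D - 1) * lam / Q := by
      apply div_nonneg _ hQ.le
      exact mul_nonneg (mul_nonneg (Nat.cast_nonneg v) (by linarith)) hlam0.le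
    have h1 : 0 < 1 + (v : ℝ) * (D - 1) * lam / Q := by linarith
    apply div_nonneg (by nlinarith) h1.le
  have hsummable : Summable f := by
    by_contra h
    rw [tsum_eq_zero_of_not_summable h] at hfix
    have : (0:ℝ) < 1 / (1 - lam) := by positivity
    rw [← hfix] at this
    exact lt_irrefl 0 this
  set T : ℝ := (2 * D - 3) * Q / (2 * (D - 1) * lam) with hTdef
  have hT0 : 0 < T := by
    apply div_pos (by nlinarith) (by nlinarith)
  set n : ℕ := ⌊T⌋₊ + 1 with hndef
  -- each factor for v ≤ ⌊T⌋₊ is at least r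
  have hfactor : ∀ v : ℕ, (v:ℝ) ≤ T →
      r ≤ (D * lam) / (1 + (v : ℝ) * (D - 1) * lam / Q) := by
    intro v hv
    have h0 : (0:ℝ) ≤ (v : ℝ) * (D - 1) * lam / Q := by
      apply div_nonneg _ hQ.le
      exact mul_nonneg (mul_nonneg (Nat.cast_nonneg v) (by linarith)) hlam0.le
    have hden0 : (0:ℝ) < 1 + (v : ℝ) * (D - 1) * lam / Q := by linarith
    have hv' : (v : ℝ) * (D - 1) * lam / Q ≤ (2 * D - 3) / 2 := by
      rw [div_le_div_iff₀ hQ (by norm_num)]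
      rw [hTdef, le_div_iff₀ (by nlinarith)] at hv
      nlinarith
    have hden : 1 + (v : ℝ) * (D - 1) * lam / Q ≤ (2 * D - 1) / 2 := by linarith
    have : (D * lam) / ((2 * D - 1) / 2) ≤ (D * lam) / (1 + (v : ℝ) * (D - 1) * lam / Q) := by
      apply div_le_div_of_nonneg_left (by positivity) hden0 hden
    calc r = (D * lam) / ((2 * D - 1) / 2) := by
            rw [hrdef]; rw [div_div_eq_mul_div]; ring_nf
      _ ≤ _ := this
  -- r^u ≤ f u for u < n
  have hpow_le : ∀ u ∈ Finset.range n, r ^ u ≤ f u := by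
    intro u hu
    rw [Finset.mem_range, hndef] at hu
    have huT : (u:ℝ) ≤ T := by
      have : u ≤ ⌊T⌋₊ := Nat.lt_succ_iff.mp hu
      calc (u:ℝ) ≤ (⌊T⌋₊ : ℝ) := by exact_mod_cast this
        _ ≤ T := Nat.floor_le hT0.le
    have : r ^ u = ∏ v ∈ Finset.Icc 1 u, r := by
      rw [Finset.prod_const, Nat.card_Icc]; norm_num
    rw [this, hfdef]
    apply Finset.prod_le_prod (fun _ _ => hr0.le)
    intro v hv
    rw [Finset.mem_Icc] at hv
    exact hfactor v (le_trans (by exact_mod_cast hv.2) huT)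
  -- geometric sum bound
  have hgeom : ∑ u ∈ Finset.range n, r ^ u ≤ 1 / (1 - lam) := by
    calc ∑ u ∈ Finset.range n, r ^ u ≤ ∑ u ∈ Finset.range n, f u :=
          Finset.sum_le_sum hpow_le
      _ ≤ ∑' u, f u := Summable.sum_le_tsum _ (fun i _ => hfnonneg i) hsummable
      _ = 1 / (1 - lam) := hfix
  have hrn : r ^ n ≤ lam / ((2 * D - 1) * (1 - lam)) := by
    rw [geom_sum_eq (ne_of_gt hr1)] at hgeom
    rw [div_le_div_iff₀ (by linarith) hs] at hgeom
    rw [le_div_iff₀ (by positivity)]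
    have hrl : r - lam = lam / (2 * D - 1) := by
      rw [hrdef]; field_simp; ring
    have h1 : r ^ n * (1 - lam) ≤ r - lam := by nlinarith
    rw [hrl] at h1
    calc r ^ n * ((2 * D - 1) * (1 - lam)) = (r ^ n * (1 - lam)) * (2 * D - 1) := by ring
      _ ≤ lam / (2 * D - 1) * (2 * D - 1) := by nlinarith
      _ = lam := by field_simp
  -- take logs
  set B : ℝ := lam / ((2 * D - 1) * (1 - lam)) with hBdef
  have hB0 : 0 < B := by positivity
  have hlogr : 0 < Real.log r := Real.log_pos hr1
  have hlogn : (n : ℝ) * Real.log r ≤ Real.log B := by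
    rw [← Real.log_pow]
    exact Real.log_le_log (by positivity) hrn
  have hTn : T ≤ (n : ℝ) := by
    rw [hndef]
    push_cast
    exact (Nat.lt_floor_add_one T).le
  have hTlog : T * Real.log r ≤ Real.log B :=
    le_trans (by nlinarith) hlogn
  -- lam * log B ≤ -log(1-lam)
  have hkey : lam * Real.log B ≤ -Real.log (1 - lam) := by
    have hls : Real.log (1 - lam) < 0 := Real.log_neg hs (by linarith)
    rcases le_or_gt (Real.log B) 0 with h | h
    · nlinarith
    · have hB1 : B ≤ 1 / (1 - lam) := by
        rw [hBdef, div_le_div_iff₀ (by positivity) hs]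
        nlinarith
      have : Real.log B ≤ Real.log (1 / (1 - lam)) := Real.log_le_log hB0 hB1
      rw [Real.log_div one_ne_zero (ne_of_gt hs), Real.log_one] at this
      nlinarith
  -- combine
  have hTlam : T * lam = (2 * D - 3) / (2 * (D - 1)) * Q := by
    have hlne : lam ≠ 0 := ne_of_gt hlam0
    have hD1 : D - 1 ≠ 0 := by intro h; linarith [hD]
    rw [hTdef]; field_simp
  have hc0 : 0 < (2 * D - 3) / (2 * (D - 1)) * Real.log (4 * D / (4 * D - 1)) := by
    apply mul_pos (by apply div_pos <;> linarith) hlog0pos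
  rw [le_div_iff₀ hc0]
  have h1 : Q * ((2 * D - 3) / (2 * (D - 1)) * Real.log (4 * D / (4 * D - 1)))
      = (T * lam) * Real.log (4 * D / (4 * D - 1)) := by rw [hTlam]; ring
  rw [h1]
  calc (T * lam) * Real.log (4 * D / (4 * D - 1))
      ≤ (T * lam) * Real.log r := by
        apply mul_le_mul_of_nonneg_left _ (mul_nonneg hT0.le hlam0.le)
        exact Real.log_le_log (by apply div_pos <;> linarith) hr_ge.le
    _ = lam * (T * Real.log r) := by ring
    _ ≤ lam * Real.log B := by nlinarith
    _ ≤ -Real.log (1 - lam) := hkey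
end

section
/- For an M/M/1 queue with arrival rate λ ∈ (0,1), service rate 1, and geometric stationary distribution π_u = (1−λ)λ^u on ℤ≥0, the mean queue length Σ_u u·π_u = λ/(1−λ), and λ/(1−λ) = Θ(1/(1−λ)) as λ → 1; in contrast, for any d ≥ 2 the mean of the distribution π_u = (1−λ)∏_{v=1}^u dλ/(1+vμ) with μ = (d−1)λ/Q̄ (Q̄ the fixed point) is Q̄ ≤ −log(1−λ)/c_d for λ close to 1. -/
open scoped BigOperators

set_option maxHeartbeats 1000000 in
/-- Contrast between the `M/M/1` mean queue length `λ/(1−λ) = Θ(1/(1−λ))` as `λ → 1`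
and the logarithmic bound `Q̄ ≤ −log(1−λ)/c_d` for the mean-field fixed point with `d ≥ 2`. -/
theorem mm1_vs_parallel_mean (d : ℕ) (hd : 2 ≤ d) :
    (∀ lam : ℝ, lam ∈ Set.Ioo (0 : ℝ) 1 →
      ∑' u : ℕ, (u : ℝ) * ((1 - lam) * lam ^ u) = lam / (1 - lam)) ∧
    (∃ c₁ c₂ : ℝ, 0 < c₁ ∧ 0 < c₂ ∧ ∃ lam₀ ∈ Set.Ico (0 : ℝ) 1,
      ∀ lam ∈ Set.Ioo lam₀ 1,
        c₁ * (1 / (1 - lam)) ≤ lam / (1 - lam) ∧ lam / (1 - lam) ≤ c₂ * (1 / (1 - lam))) ∧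
    (∀ lam Q : ℝ, lam ∈ Set.Ioo ((4 * (d : ℝ) - 2) / (4 * (d : ℝ) - 1)) 1 → 0 < Q →
      (∑' u : ℕ, ∏ v ∈ Finset.Icc 1 u,
          ((d : ℝ) * lam) / (1 + (v : ℝ) * ((d : ℝ) - 1) * lam / Q)) = 1 / (1 - lam) →
      Q ≤ -Real.log (1 - lam) /
        (((2 * (d : ℝ) - 3) / (2 * ((d : ℝ) - 1))) *
          Real.log (4 * (d : ℝ) / (4 * (d : ℝ) - 1)))) := by
  have hd2 : (2 : ℝ) ≤ (d : ℝ) := by exact_mod_cast hd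
  refine ⟨?_, ?_, ?_⟩
  · -- Part 1: mean of the geometric distribution
    intro lam hlam
    obtain ⟨h0, h1⟩ := hlam
    have hnorm : ‖lam‖ < 1 := by rw [Real.norm_eq_abs, abs_of_pos h0]; exact h1
    have hne : (1 : ℝ) - lam ≠ 0 := by linarith
    calc ∑' u : ℕ, (u : ℝ) * ((1 - lam) * lam ^ u)
        = ∑' u : ℕ, (1 - lam) * ((u : ℝ) * lam ^ u) := by
          apply tsum_congr; intro u; ring
      _ = (1 - lam) * ∑' u : ℕ, (u : ℝ) * lam ^ u := tsum_mul_left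
      _ = (1 - lam) * (lam / (1 - lam) ^ 2) := by
          rw [tsum_coe_mul_geometric_of_norm_lt_one hnorm]
      _ = lam / (1 - lam) := by field_simp
  · -- Part 2: Θ(1/(1-λ))
    refine ⟨1/2, 1, by norm_num, by norm_num, 1/2, ⟨by norm_num, by norm_num⟩, ?_⟩
    intro lam hlam
    obtain ⟨h0, h1⟩ := hlam
    have hpos : (0 : ℝ) < 1 - lam := by linarith
    constructor
    · rw [mul_one_div]
      exact div_le_div_of_nonneg_right (by linarith) hpos.le
    · rw [one_mul]
      exact div_le_div_of_nonneg_right (by linarith) hpos.le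
  · -- Part 3
    intro lam Q hlam hQ hsum
    set D : ℝ := (d : ℝ) with hDdef
    obtain ⟨hlb, hub⟩ := hlam
    have hden : (0 : ℝ) < 4 * D - 1 := by linarith
    have hD1 : (0 : ℝ) < D - 1 := by linarith
    have hlpos : 0 < lam := lt_trans (div_pos (by linarith) hden) hlb
    have hl41 : 4 * D - 2 < lam * (4 * D - 1) := by
      rw [div_lt_iff₀ hden] at hlb; linarith
    have h1l : (0 : ℝ) < 1 - lam := by linarith
    -- γ
    set γ : ℝ := 4 * D / (4 * D - 1) with hγdef
    have hγ1 : 1 < γ := by rw [lt_div_iff₀ hden]; linarith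
    have hγ0 : 0 < γ := lt_trans one_pos hγ1
    have hlogγ : 0 < Real.log γ := Real.log_pos hγ1
    set c : ℝ := (2 * D - 3) / (2 * (D - 1)) * Real.log γ with hcdef
    have hc : 0 < c := mul_pos (div_pos (by linarith) (by linarith)) hlogγ
    by_contra hcon
    push_neg at hcon
    have hcQ : -Real.log (1 - lam) < Q * c := (div_lt_iff₀ hc).mp hcon
    -- the term function
    set f : ℕ → ℝ := fun u => ∏ v ∈ Finset.Icc 1 u,
        (D * lam) / (1 + (v : ℝ) * (D - 1) * lam / Q) with hfdef
    have hfpos : ∀ u, 0 < f u := by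
      intro u
      apply Finset.prod_pos
      intro v hv
      apply div_pos (mul_pos (by linarith) hlpos)
      have : (0 : ℝ) ≤ (v : ℝ) * (D - 1) * lam / Q := by positivity
      linarith
    have hM : (0 : ℝ) < 1 / (1 - lam) := by positivity
    have hsummable : Summable f := by
      by_contra h
      rw [tsum_eq_zero_of_not_summable h] at hsum
      linarith
    -- N := floor of α Q / ((D-1) lam)
    set N : ℕ := ⌊(2 * D - 3) / 2 * Q / ((D - 1) * lam)⌋₊ with hNdef
    have hargnn : (0 : ℝ) ≤ (2 * D - 3) / 2 * Q / ((D - 1) * lam) :=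
      div_nonneg (mul_nonneg (by linarith) hQ.le) (mul_pos hD1 hlpos).le
    -- each factor at v ≤ N is ≥ γ
    have hfactor : ∀ v : ℕ, v ≤ N →
        γ ≤ (D * lam) / (1 + (v : ℝ) * (D - 1) * lam / Q) := by
      intro v hv
      have hvle : (v : ℝ) ≤ (2 * D - 3) / 2 * Q / ((D - 1) * lam) := by
        calc (v : ℝ) ≤ (N : ℝ) := by exact_mod_cast hv
          _ ≤ _ := Nat.floor_le hargnn
      have hx : (v : ℝ) * (D - 1) * lam / Q ≤ (2 * D - 3) / 2 := by
        rw [div_le_iff₀ hQ]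
        rw [le_div_iff₀ (mul_pos hD1 hlpos)] at hvle
        nlinarith
      have hx0 : (0 : ℝ) ≤ (v : ℝ) * (D - 1) * lam / Q := by positivity
      set x : ℝ := (v : ℝ) * (D - 1) * lam / Q
      have hx1 : (0 : ℝ) < 1 + x := by linarith
      rw [hγdef, div_le_div_iff₀ hden hx1]
      nlinarith
    -- product lower bound
    have hprod : ∀ u : ℕ, u ≤ N → γ ^ u ≤ f u := by
      intro u hu
      have hcard : (Finset.Icc 1 u).card = u := by
        rw [Nat.card_Icc]; omega
      calc γ ^ u = ∏ v ∈ Finset.Icc 1 u, γ := by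
            rw [Finset.prod_const, hcard]
        _ ≤ f u := by
            apply Finset.prod_le_prod (fun v _ => le_of_lt hγ0)
            intro v hv
            exact hfactor v (le_trans (Finset.mem_Icc.mp hv).2 hu)
    -- partial sum vs tsum
    have hpartial : ∑ u ∈ Finset.range (N + 1), f u ≤ 1 / (1 - lam) := by
      rw [← hsum]
      exact Summable.sum_le_tsum _ (fun u _ => le_of_lt (hfpos u)) hsummable
    have hgeomle : ∑ u ∈ Finset.range (N + 1), γ ^ u
        ≤ ∑ u ∈ Finset.range (N + 1), f u := by
      apply Finset.sum_le_sum
      intro u hu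
      exact hprod u (Nat.lt_succ_iff.mp (Finset.mem_range.mp hu))
    have hgeom : ∑ u ∈ Finset.range (N + 1), γ ^ u = (γ ^ (N + 1) - 1) / (γ - 1) :=
      geom_sum_eq (ne_of_gt hγ1) (N + 1)
    -- lower bound on γ ^ (N+1)
    have hNlt : (2 * D - 3) / 2 * Q / ((D - 1) * lam) < (N : ℝ) + 1 :=
      Nat.lt_floor_add_one _
    have hQc : Q * c < ((N : ℝ) + 1) * Real.log γ := by
      have h1 : (2 * D - 3) / 2 * Q / (D - 1) ≤ (2 * D - 3) / 2 * Q / ((D - 1) * lam) := by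
        apply div_le_div_of_nonneg_left (mul_nonneg (by linarith) hQ.le) (mul_pos hD1 hlpos)
        nlinarith
      have h2 : Q * c = (2 * D - 3) / 2 * Q / (D - 1) * Real.log γ := by
        rw [hcdef]; field_simp
      rw [h2]
      apply mul_lt_mul_of_pos_right _ hlogγ
      linarith
    have hexp : 1 / (1 - lam) < γ ^ (N + 1) := by
      have he1 : 1 / (1 - lam) = Real.exp (-Real.log (1 - lam)) := by
        rw [Real.exp_neg, Real.exp_log h1l, one_div]
      have he2 : Real.exp (((N : ℝ) + 1) * Real.log γ) = γ ^ (N + 1) := by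
        have hcast : ((N : ℝ) + 1) = ((N + 1 : ℕ) : ℝ) := by push_cast; ring
        rw [hcast, Real.exp_nat_mul, Real.exp_log hγ0]
      rw [he1, ← he2]
      apply Real.exp_lt_exp.mpr
      linarith
    -- 4D - 1 < 1/(1-lam)
    have h41M : 4 * D - 1 < 1 / (1 - lam) := by
      rw [lt_div_iff₀ h1l]; nlinarith
    -- γ - 1 = 1/(4D-1)
    have hγsub : γ - 1 = 1 / (4 * D - 1) := by
      rw [hγdef, div_sub_one (ne_of_gt hden)]
      congr 1
      ring
    have hfinal : 1 / (1 - lam) < (γ ^ (N + 1) - 1) / (γ - 1) := by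
      rw [hγsub, div_div_eq_mul_div, div_one]
      set y : ℝ := γ ^ (N + 1)
      nlinarith [mul_lt_mul_of_pos_right hexp hden,
        mul_lt_mul_of_pos_right h41M (show (0:ℝ) < 4 * D - 2 by linarith)]
    rw [← hgeom] at hfinal
    linarith
end

section
/- Let n ≥ d ≥ 1, m = C(n,d), λ ∈ (0,1), and consider the function Ψ(x) = Σ_{j∈[n]} q_j² on ℤ≥0^m where q_j = Σ_{i: j∈i} x_i. For the Markov generator G with transitions x → x+e_i at rate nλ/m and x → x−e_i at rate x_i Σ_{j∈i} 1/q_j (for x_i ≥ 1), one has G Ψ(x) ≤ 2d(λ−1)Σ_{j∈[n]} q_j + d(nλ + B(x)), where B(x) = |{j : q_j > 0}|. -/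
open scoped BigOperators

/-- Classes are the `d`-element subsets of `[n]`. -/
def classes (n d : ℕ) : Finset (Finset (Fin n)) :=
  Finset.univ.filter (fun i : Finset (Fin n) => i.card = d)

/-- `q_j(x) = Σ_{i : j ∈ i} x_i`, the queue length at server `j` in state `x`. -/
def queueLen (n d : ℕ) (x : Finset (Fin n) → ℕ) (j : Fin n) : ℕ :=
  ∑ i ∈ (classes n d).filter (fun i => j ∈ i), x i

/-- The quadratic Lyapunov function `Ψ(x) = Σ_j q_j²`. -/
noncomputable def lyap (n d : ℕ) (x : Finset (Fin n) → ℕ) : ℝ :=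
  ∑ j : Fin n, ((queueLen n d x j : ℝ)) ^ 2

/-- The number of busy servers `B(x)`. -/
def busy (n d : ℕ) (x : Finset (Fin n) → ℕ) : ℕ :=
  (Finset.univ.filter (fun j : Fin n => 0 < queueLen n d x j)).card

/-- The generator applied to `Ψ`: arrivals at rate `nλ/m` per class,
departures at rate `x_i Σ_{j∈i} 1/q_j`. -/
noncomputable def genLyap (n d : ℕ) (lam : ℝ) (x : Finset (Fin n) → ℕ) : ℝ :=
  ∑ i ∈ classes n d,
    (((n : ℝ) * lam / (n.choose d : ℝ)) *
        (lyap n d (Function.update x i (x i + 1)) - lyap n d x) +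
      (x i : ℝ) * (∑ j ∈ i, 1 / (queueLen n d x j : ℝ)) *
        (lyap n d (Function.update x i (x i - 1)) - lyap n d x))

section Aux

open Finset

lemma classes_eq (n d : ℕ) : classes n d = Finset.powersetCard d Finset.univ := by
  ext i
  simp [classes, Finset.mem_powersetCard]

lemma card_classes (n d : ℕ) : (classes n d).card = n.choose d := by
  rw [classes_eq, Finset.card_powersetCard, Finset.card_univ, Fintype.card_fin]

lemma card_mem_classes (n d : ℕ) (hd : 1 ≤ d) (j : Fin n) :
    ((classes n d).filter (fun i => j ∈ i)).card = (n - 1).choose (d - 1) := by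
  have h1 : ((classes n d).filter (fun i => j ∈ i)).card
      = (Finset.powersetCard (d - 1) (Finset.univ.erase j)).card := by
    refine Finset.card_bij' (fun i _ => i.erase j) (fun t _ => insert j t) ?_ ?_ ?_ ?_
    case refine_1
    · intro i hi
      simp only [classes, Finset.mem_filter, Finset.mem_univ, true_and] at hi
      rw [Finset.mem_powersetCard]
      refine ⟨fun a ha => Finset.mem_erase.2 ⟨(Finset.mem_erase.1 ha).1, Finset.mem_univ a⟩, ?_⟩
      rw [Finset.card_erase_of_mem hi.2, hi.1]
    case refine_2
    · intro t ht
      rw [Finset.mem_powersetCard] at ht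
      have hjt : j ∉ t := fun h => (Finset.mem_erase.1 (ht.1 h)).1 rfl
      simp only [classes, Finset.mem_filter, Finset.mem_univ, true_and]
      refine ⟨?_, Finset.mem_insert_self _ _⟩
      rw [Finset.card_insert_of_notMem hjt, ht.2, Nat.sub_add_cancel hd]
    case refine_3
    · intro i hi
      simp only [classes, Finset.mem_filter] at hi
      exact Finset.insert_erase hi.2
    case refine_4
    · intro t ht
      rw [Finset.mem_powersetCard] at ht
      have hjt : j ∉ t := fun h => (Finset.mem_erase.1 (ht.1 h)).1 rfl
      exact Finset.erase_insert hjt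
  rw [h1, Finset.card_powersetCard, Finset.card_erase_of_mem (Finset.mem_univ j),
    Finset.card_univ, Fintype.card_fin]

lemma key_count (n d : ℕ) (hd : 1 ≤ d) (hdn : d ≤ n) :
    n * (n - 1).choose (d - 1) = d * n.choose d := by
  obtain ⟨N, rfl⟩ : ∃ N, n = N + 1 := ⟨n - 1, by omega⟩
  obtain ⟨D, rfl⟩ : ∃ D, d = D + 1 := ⟨d - 1, by omega⟩
  simp only [Nat.add_sub_cancel]
  rw [Nat.add_one_mul_choose_eq, mul_comm]

lemma queueLen_update_add (n d : ℕ) (x : Finset (Fin n) → ℕ) (i : Finset (Fin n))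
    (hi : i ∈ classes n d) (j : Fin n) :
    queueLen n d (Function.update x i (x i + 1)) j
      = queueLen n d x j + (if j ∈ i then 1 else 0) := by
  unfold queueLen
  by_cases hj : j ∈ i
  · have hmem : i ∈ (classes n d).filter (fun i => j ∈ i) := Finset.mem_filter.2 ⟨hi, hj⟩
    rw [if_pos hj, Finset.sum_update_of_mem hmem,
      Finset.sum_eq_sum_sdiff_singleton_add hmem x]
    omega
  · rw [if_neg hj, add_zero]
    apply Finset.sum_congr rfl
    intro i' hi'
    have : i' ≠ i := fun h => hj (h ▸ (Finset.mem_filter.1 hi').2)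
    rw [Function.update_of_ne this]

lemma queueLen_ge (n d : ℕ) (x : Finset (Fin n) → ℕ) (i : Finset (Fin n))
    (hi : i ∈ classes n d) (j : Fin n) (hj : j ∈ i) :
    x i ≤ queueLen n d x j := by
  exact Finset.single_le_sum (f := x) (fun _ _ => Nat.zero_le _)
    (Finset.mem_filter.2 ⟨hi, hj⟩)

lemma queueLen_update_sub (n d : ℕ) (x : Finset (Fin n) → ℕ) (i : Finset (Fin n))
    (hi : i ∈ classes n d) (hx : 1 ≤ x i) (j : Fin n) :
    queueLen n d (Function.update x i (x i - 1)) j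
      = queueLen n d x j - (if j ∈ i then 1 else 0) := by
  unfold queueLen
  by_cases hj : j ∈ i
  · have hmem : i ∈ (classes n d).filter (fun i => j ∈ i) := Finset.mem_filter.2 ⟨hi, hj⟩
    rw [if_pos hj, Finset.sum_update_of_mem hmem,
      Finset.sum_eq_sum_sdiff_singleton_add hmem x]
    omega
  · rw [if_neg hj, Nat.sub_zero]
    apply Finset.sum_congr rfl
    intro i' hi'
    have : i' ≠ i := fun h => hj (h ▸ (Finset.mem_filter.1 hi').2)
    rw [Function.update_of_ne this]

lemma lyap_update_add (n d : ℕ) (x : Finset (Fin n) → ℕ) (i : Finset (Fin n))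
    (hi : i ∈ classes n d) :
    lyap n d (Function.update x i (x i + 1)) - lyap n d x
      = ∑ j ∈ i, (2 * (queueLen n d x j : ℝ) + 1) := by
  unfold lyap
  rw [← Finset.sum_sub_distrib]
  have h : ∀ j : Fin n, ((queueLen n d (Function.update x i (x i + 1)) j : ℝ)) ^ 2
      - ((queueLen n d x j : ℝ)) ^ 2
      = if j ∈ i then 2 * (queueLen n d x j : ℝ) + 1 else 0 := by
    intro j
    rw [queueLen_update_add n d x i hi j]
    by_cases hj : j ∈ i
    · rw [if_pos hj, if_pos hj]
      push_cast
      ring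
    · rw [if_neg hj, if_neg hj]
      push_cast
      ring
  simp_rw [h]
  rw [Finset.sum_ite_mem, Finset.univ_inter]

lemma lyap_update_sub (n d : ℕ) (x : Finset (Fin n) → ℕ) (i : Finset (Fin n))
    (hi : i ∈ classes n d) (hx : 1 ≤ x i) :
    lyap n d (Function.update x i (x i - 1)) - lyap n d x
      = ∑ j ∈ i, (1 - 2 * (queueLen n d x j : ℝ)) := by
  unfold lyap
  rw [← Finset.sum_sub_distrib]
  have h : ∀ j : Fin n, ((queueLen n d (Function.update x i (x i - 1)) j : ℝ)) ^ 2
      - ((queueLen n d x j : ℝ)) ^ 2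
      = if j ∈ i then 1 - 2 * (queueLen n d x j : ℝ) else 0 := by
    intro j
    rw [queueLen_update_sub n d x i hi hx j]
    by_cases hj : j ∈ i
    · have hq : 1 ≤ queueLen n d x j := le_trans hx (queueLen_ge n d x i hi j hj)
      rw [if_pos hj, if_pos hj, Nat.cast_sub (by simpa using hq)]
      push_cast
      ring
    · rw [if_neg hj, if_neg hj, Nat.sub_zero]
      ring
  simp_rw [h]
  rw [Finset.sum_ite_mem, Finset.univ_inter]

lemma sum_sum_comm (n d : ℕ) (g : Finset (Fin n) → Fin n → ℝ) :
    ∑ i ∈ classes n d, ∑ j ∈ i, g i j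
      = ∑ j : Fin n, ∑ i ∈ (classes n d).filter (fun i => j ∈ i), g i j := by
  have h1 : ∀ i : Finset (Fin n), ∑ j ∈ i, g i j
      = ∑ j : Fin n, if j ∈ i then g i j else 0 := by
    intro i
    rw [Finset.sum_ite_mem, Finset.univ_inter]
  simp_rw [h1]
  rw [Finset.sum_comm]
  apply Finset.sum_congr rfl
  intro j _
  rw [← Finset.sum_filter]

end Aux

/-- Drift bound: `GΨ(x) ≤ 2d(λ−1)Σ_j q_j + d(nλ + B(x))`. -/
theorem genLyap_drift_bound (n d : ℕ) (hd : 1 ≤ d) (hdn : d ≤ n) (lam : ℝ)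
    (hl : lam ∈ Set.Ioo (0 : ℝ) 1) (x : Finset (Fin n) → ℕ) :
    genLyap n d lam x ≤
      2 * (d : ℝ) * (lam - 1) * (∑ j : Fin n, (queueLen n d x j : ℝ)) +
        (d : ℝ) * ((n : ℝ) * lam + (busy n d x : ℝ)) := by
  obtain ⟨hl0, hl1⟩ := hl
  set q : Fin n → ℝ := fun j => (queueLen n d x j : ℝ) with hq
  have hm : (0 : ℝ) < (n.choose d : ℝ) := by
    exact_mod_cast Nat.choose_pos hdn
  -- Per-class bound
  have step : ∀ i ∈ classes n d,
      ((n : ℝ) * lam / (n.choose d : ℝ)) *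
          (lyap n d (Function.update x i (x i + 1)) - lyap n d x) +
        (x i : ℝ) * (∑ j ∈ i, 1 / (queueLen n d x j : ℝ)) *
          (lyap n d (Function.update x i (x i - 1)) - lyap n d x)
      ≤ ((n : ℝ) * lam / (n.choose d : ℝ)) * (∑ j ∈ i, (2 * q j + 1)) +
        ((d : ℝ) * ∑ j ∈ i, (x i : ℝ) / q j - 2 * (d : ℝ)^2 * (x i : ℝ)) := by
    intro i hi
    rw [lyap_update_add n d x i hi]
    have hcard : (i.card : ℝ) = (d : ℝ) := by
      exact_mod_cast congrArg Nat.cast ((Finset.mem_filter.1 hi).2)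
    gcongr ?_ + ?_
    · exact le_refl _
    rcases Nat.eq_zero_or_pos (x i) with h0 | hpos
    · simp [h0, Finset.sum_div]
    -- x i ≥ 1
    have hqpos : ∀ j ∈ i, (0 : ℝ) < q j := by
      intro j hj
      have h1 := lt_of_lt_of_le hpos (queueLen_ge n d x i hi j hj)
      simp only [hq]
      exact_mod_cast h1
    rw [lyap_update_sub n d x i hi hpos]
    have hexp : (∑ j ∈ i, (1 - 2 * q j)) = (d : ℝ) - 2 * ∑ j ∈ i, q j := by
      rw [Finset.sum_sub_distrib, Finset.sum_const, ← Finset.mul_sum]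
      simp [hcard]
    rw [hexp]
    have hCS : (d : ℝ)^2 ≤ (∑ j ∈ i, 1 / q j) * (∑ j ∈ i, q j) := by
      have := Finset.sum_sq_le_sum_mul_sum_of_sq_eq_mul i
        (r := fun _ => (1 : ℝ)) (f := fun j => 1 / q j) (g := fun j => q j)
        (fun j hj => by positivity)
        (fun j hj => (hqpos j hj).le)
        (fun j hj => by
          have hne := (hqpos j hj).ne'
          simp only [one_pow]
          field_simp)
      simpa [hcard] using this
    have hS : (∑ j ∈ i, (x i : ℝ) / q j) = (x i : ℝ) * ∑ j ∈ i, 1 / q j := by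
      rw [Finset.mul_sum]
      apply Finset.sum_congr rfl
      intro j _
      ring
    rw [hS]
    have hxpos : (0 : ℝ) ≤ (x i : ℝ) := Nat.cast_nonneg _
    have h1 : (x i : ℝ) * (∑ j ∈ i, 1 / q j) * ((d : ℝ) - 2 * ∑ j ∈ i, q j)
        = (d : ℝ) * ((x i : ℝ) * ∑ j ∈ i, 1 / q j)
          - 2 * (x i : ℝ) * ((∑ j ∈ i, 1 / q j) * (∑ j ∈ i, q j)) := by ring
    rw [h1]
    have h2 : 2 * (d : ℝ)^2 * (x i : ℝ)
        ≤ 2 * (x i : ℝ) * ((∑ j ∈ i, 1 / q j) * (∑ j ∈ i, q j)) := by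
      calc 2 * (d : ℝ)^2 * (x i : ℝ) = 2 * (x i : ℝ) * (d : ℝ)^2 := by ring
        _ ≤ 2 * (x i : ℝ) * ((∑ j ∈ i, 1 / q j) * (∑ j ∈ i, q j)) := by
            apply mul_le_mul_of_nonneg_left hCS (by positivity)
    linarith
  have hbound := Finset.sum_le_sum step
  unfold genLyap
  refine le_trans hbound ?_
  rw [Finset.sum_add_distrib]
  -- Arrival part
  have hc := card_mem_classes n d hd
  have hA : ∑ i ∈ classes n d, ((n : ℝ) * lam / (n.choose d : ℝ)) * (∑ j ∈ i, (2 * q j + 1))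
      = 2 * (d : ℝ) * lam * (∑ j : Fin n, q j) + (d : ℝ) * ((n : ℝ) * lam) := by
    rw [← Finset.mul_sum, sum_sum_comm n d (fun _ j => 2 * q j + 1)]
    have h3 : ∀ j : Fin n, ∑ i ∈ (classes n d).filter (fun i => j ∈ i), (2 * q j + 1)
        = ((n - 1).choose (d - 1) : ℝ) * (2 * q j + 1) := by
      intro j
      rw [Finset.sum_const, hc j, nsmul_eq_mul]
    simp_rw [h3]
    have hkey : (n : ℝ) * ((n - 1).choose (d - 1) : ℝ) = (d : ℝ) * (n.choose d : ℝ) := by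
      exact_mod_cast congrArg Nat.cast (key_count n d hd hdn)
    rw [div_mul_eq_mul_div, div_eq_iff hm.ne']
    have hexp2 : ∑ j : Fin n, ((n - 1).choose (d - 1) : ℝ) * (2 * q j + 1)
        = 2 * ((n - 1).choose (d - 1) : ℝ) * (∑ j : Fin n, q j)
          + ((n - 1).choose (d - 1) : ℝ) * (n : ℝ) := by
      simp only [mul_add, mul_one, Finset.sum_add_distrib, Finset.sum_const,
        Finset.card_univ, Fintype.card_fin, nsmul_eq_mul]
      simp only [← Finset.mul_sum]
      ring
    rw [hexp2]
    linear_combination (lam * (2 * (∑ j : Fin n, q j) + (n : ℝ))) * hkey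
  -- Departure parts
  have hB : ∑ i ∈ classes n d, ((d : ℝ) * ∑ j ∈ i, (x i : ℝ) / q j - 2 * (d : ℝ)^2 * (x i : ℝ))
      = (d : ℝ) * (busy n d x : ℝ) - 2 * (d : ℝ) * (∑ j : Fin n, q j) := by
    rw [Finset.sum_sub_distrib, ← Finset.mul_sum, sum_sum_comm n d (fun i j => (x i : ℝ) / q j)]
    have hqsum : ∀ j : Fin n, ∑ i ∈ (classes n d).filter (fun i => j ∈ i), (x i : ℝ) / q j
        = q j / q j := by
      intro j
      rw [← Finset.sum_div, hq]
      norm_cast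
    simp_rw [hqsum]
    have hbusy : ∑ j : Fin n, q j / q j = (busy n d x : ℝ) := by
      unfold busy
      rw [Finset.card_filter]
      push_cast
      apply Finset.sum_congr rfl
      intro j _
      by_cases hqj : 0 < queueLen n d x j
      · rw [if_pos hqj, hq]
        have : (0:ℝ) < (queueLen n d x j : ℝ) := by exact_mod_cast hqj
        field_simp
      · rw [if_neg hqj]
        have : queueLen n d x j = 0 := by omega
        simp [hq, this]
    rw [hbusy]
    -- second sum: Σ_i 2 d² x_i = 2 d Σ_j q_j
    have hqx : ∑ j : Fin n, q j = (d : ℝ) * ∑ i ∈ classes n d, (x i : ℝ) := by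
      have := sum_sum_comm n d (fun i _ => (x i : ℝ))
      have hin : ∀ i ∈ classes n d, ∑ j ∈ i, (x i : ℝ) = (d : ℝ) * (x i : ℝ) := by
        intro i hi
        rw [Finset.sum_const, nsmul_eq_mul]
        have : (i.card : ℝ) = (d : ℝ) := by
          exact_mod_cast congrArg Nat.cast ((Finset.mem_filter.1 hi).2)
        rw [this]
      rw [Finset.sum_congr rfl hin, ← Finset.mul_sum] at this
      have hout : ∀ j : Fin n, ∑ i ∈ (classes n d).filter (fun i => j ∈ i), (x i : ℝ)
          = q j := by
        intro j
        rw [hq]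
        norm_cast
      rw [Finset.sum_congr rfl (fun j _ => hout j)] at this
      linarith
    have : ∑ i ∈ classes n d, 2 * (d : ℝ)^2 * (x i : ℝ)
        = 2 * (d : ℝ) * ((d : ℝ) * ∑ i ∈ classes n d, (x i : ℝ)) := by
      rw [← Finset.mul_sum]
      ring
    rw [this, ← hqx]
  rw [hA, hB]
  ring_nf
  linarith
end

section
/- Let H = (V,E) be a d-uniform hypergraph and let k* be the largest k such that the k-core of H is non-empty. Then the optimal makespan W_max(H) of the fractional scheduling LP satisfies k*/d ≤ W_max(H) ≤ k*. -/
open scoped BigOperators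

lemma peel_aux {V E : Type*} [Fintype V] [Fintype E] [DecidableEq V]
    (ends : E → Finset V) (kstar : ℕ)
    (hne : ∀ e : E, (ends e).Nonempty)
    (hno : ∀ U : Finset V, U.Nonempty → ∃ v ∈ U,
      (Finset.univ.filter (fun e : E => v ∈ ends e ∧ ends e ⊆ U)).card ≤ kstar)
    (S : Finset V) :
    ∃ g : E → V, (∀ e, ends e ⊆ S → g e ∈ ends e) ∧
      (∀ w : V, (Finset.univ.filter (fun e : E => ends e ⊆ S ∧ g e = w)).card ≤ kstar) := by
  classical
  induction S using Finset.strongInduction with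
  | _ S ih =>
    rcases S.eq_empty_or_nonempty with rfl | hS
    · refine ⟨fun e => (hne e).choose, ?_, ?_⟩
      · intro e he
        exact absurd ((hne e).choose_spec) (by simpa [Finset.subset_empty.mp he] using (Finset.not_mem_empty _))
      · intro w
        have : (Finset.univ.filter (fun e : E => ends e ⊆ (∅ : Finset V) ∧ (hne e).choose = w)) = ∅ := by
          apply Finset.filter_false_of_mem
          intro e _
          rintro ⟨he, -⟩
          exact absurd ((hne e).choose_spec) (by simpa [Finset.subset_empty.mp he] using (Finset.not_mem_empty _))
        rw [this]
        simp
    · obtain ⟨v, hvS, hvdeg⟩ := hno S hS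
      obtain ⟨g', hg1', hg2'⟩ := ih (S.erase v) (Finset.erase_ssubset hvS)
      refine ⟨fun e => if v ∈ ends e ∧ ends e ⊆ S then v else g' e, ?_, ?_⟩
      · intro e he
        by_cases h : v ∈ ends e ∧ ends e ⊆ S
        · simp [h, h.1]
        · have hv : v ∉ ends e := fun hv => h ⟨hv, he⟩
          have hsub : ends e ⊆ S.erase v := fun u hu =>
            Finset.mem_erase.mpr ⟨fun h' => hv (h' ▸ hu), he hu⟩
          simpa [h] using hg1' e hsub
      · intro w
        by_cases hw : w = v
        · rw [hw]
          refine le_trans (Finset.card_le_card ?_) hvdeg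
          intro e he
          simp only [Finset.mem_filter, Finset.mem_univ, true_and] at he ⊢
          obtain ⟨heS, hge⟩ := he
          by_cases h : v ∈ ends e ∧ ends e ⊆ S
          · exact h
          · exfalso
            have hv : v ∉ ends e := fun hv => h ⟨hv, heS⟩
            have hsub : ends e ⊆ S.erase v := fun u hu =>
              Finset.mem_erase.mpr ⟨fun h' => hv (h' ▸ hu), heS hu⟩
            simp only [h, if_false] at hge
            exact hv (hge ▸ hg1' e hsub)
        · refine le_trans (Finset.card_le_card ?_) (hg2' w)
          intro e he
          simp only [Finset.mem_filter, Finset.mem_univ, true_and] at he ⊢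
          obtain ⟨heS, hge⟩ := he
          by_cases h : v ∈ ends e ∧ ends e ⊆ S
          · simp only [h, if_true] at hge; exact absurd hge.symm hw
          · have hv : v ∉ ends e := fun hv => h ⟨hv, heS⟩
            have hsub : ends e ⊆ S.erase v := fun u hu =>
              Finset.mem_erase.mpr ⟨fun h' => hv (h' ▸ hu), heS hu⟩
            simp only [h, if_false] at hge
            exact ⟨hsub, hge⟩

/-- Bounds on the optimal makespan of the fractional scheduling LP in terms of the largest
`k` with non-empty `k`-core. -/
theorem makespan_core_bounds (V E : Type*) [Fintype V] [Fintype E] [DecidableEq V]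
    [Nonempty E] (d : ℕ) (hd : 1 ≤ d) (ends : E → Finset V)
    (hunif : ∀ e : E, (ends e).card = d)
    (kstar : ℕ) (hk : 1 ≤ kstar)
    (hcore : ∃ U : Finset V, U.Nonempty ∧ ∀ v ∈ U,
      kstar ≤ (Finset.univ.filter (fun e : E => v ∈ ends e ∧ ends e ⊆ U)).card)
    (hnocore : ¬ ∃ U : Finset V, U.Nonempty ∧ ∀ v ∈ U,
      kstar + 1 ≤ (Finset.univ.filter (fun e : E => v ∈ ends e ∧ ends e ⊆ U)).card) :
    (∃ x : V → E → ℝ, (∀ v e, 0 ≤ x v e) ∧ (∀ v e, v ∉ ends e → x v e = 0) ∧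
      (∀ v, ∑ e : E, x v e ≤ 1) ∧ ∀ e : E, (1 : ℝ) / kstar ≤ ∑ v ∈ ends e, x v e) ∧
    (∀ x : V → E → ℝ, (∀ v e, 0 ≤ x v e) → (∀ v e, v ∉ ends e → x v e = 0) →
      (∀ v, ∑ e : E, x v e ≤ 1) → ∃ e : E, ∑ v ∈ ends e, x v e ≤ (d : ℝ) / kstar) := by
  classical
  have hkpos : (0 : ℝ) < kstar := by exact_mod_cast hk
  constructor
  · -- upper bound via peeling
    push_neg at hnocore
    have hno : ∀ U : Finset V, U.Nonempty → ∃ v ∈ U,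
        (Finset.univ.filter (fun e : E => v ∈ ends e ∧ ends e ⊆ U)).card ≤ kstar := by
      intro U hU
      obtain ⟨v, hv, hv2⟩ := hnocore U hU
      exact ⟨v, hv, by omega⟩
    have hne : ∀ e : E, (ends e).Nonempty := by
      intro e
      rw [← Finset.card_pos, hunif e]; omega
    obtain ⟨g, hg1, hg2⟩ := peel_aux ends kstar hne hno Finset.univ
    refine ⟨fun v e => if g e = v then (kstar : ℝ)⁻¹ else 0, ?_, ?_, ?_, ?_⟩
    · intro v e; positivity
    · intro v e hv
      have := hg1 e (Finset.subset_univ _)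
      have hne' : g e ≠ v := fun h => hv (h ▸ this)
      simp [hne']
    · intro v
      have hcard : (Finset.univ.filter (fun e : E => g e = v)).card ≤ kstar := by
        have := hg2 v
        simpa using this
      calc ∑ e : E, (if g e = v then (kstar : ℝ)⁻¹ else 0)
          = ∑ e ∈ Finset.univ.filter (fun e : E => g e = v), (kstar : ℝ)⁻¹ := by
            rw [Finset.sum_filter]
        _ = ((Finset.univ.filter (fun e : E => g e = v)).card : ℝ) * (kstar : ℝ)⁻¹ := by
            rw [Finset.sum_const, nsmul_eq_mul]
        _ ≤ (kstar : ℝ) * (kstar : ℝ)⁻¹ := by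
            apply mul_le_mul_of_nonneg_right _ (by positivity)
            exact_mod_cast hcard
        _ ≤ 1 := by rw [mul_inv_cancel₀ (ne_of_gt hkpos)]
    · intro e
      have hmem := hg1 e (Finset.subset_univ _)
      have : (1 : ℝ) / kstar ≤ (if g e = g e then (kstar : ℝ)⁻¹ else 0) := by
        simp [one_div]
      refine this.trans (Finset.single_le_sum (f := fun v => if g e = v then (kstar:ℝ)⁻¹ else 0)
        (fun v _ => by positivity) hmem)
  · -- lower bound via the k*-core
    intro x hpos hzero hcap
    obtain ⟨U, hUne, hU⟩ := hcore
    set E' := Finset.univ.filter (fun e : E => ends e ⊆ U) with hE'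
    obtain ⟨v0, hv0⟩ := hUne
    have h1 : 0 < (Finset.univ.filter (fun e : E => v0 ∈ ends e ∧ ends e ⊆ U)).card :=
      lt_of_lt_of_le (by omega) (hU v0 hv0)
    obtain ⟨e0, he0⟩ := Finset.card_pos.mp h1
    have he0' : e0 ∈ E' := by
      simp only [hE', Finset.mem_filter]
      exact ⟨Finset.mem_univ _, (Finset.mem_filter.mp he0).2.2⟩
    have hUcard : U.Nonempty := ⟨v0, hv0⟩
    -- double counting: k* |U| ≤ d |E'|
    have hcount : kstar * U.card ≤ d * E'.card := by
      have h2 : kstar * U.card ≤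
          ∑ v ∈ U, (Finset.univ.filter (fun e : E => v ∈ ends e ∧ ends e ⊆ U)).card := by
        calc kstar * U.card = ∑ _v ∈ U, kstar := by
              rw [Finset.sum_const, smul_eq_mul, mul_comm]
          _ ≤ _ := Finset.sum_le_sum (fun v hv => hU v hv)
      have h3 : ∑ v ∈ U, (Finset.univ.filter (fun e : E => v ∈ ends e ∧ ends e ⊆ U)).card
          = d * E'.card := by
        have hstep : ∀ v : V, (Finset.univ.filter (fun e : E => v ∈ ends e ∧ ends e ⊆ U)).card
            = ∑ e ∈ E', (if v ∈ ends e then 1 else 0) := by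
          intro v
          have heq : Finset.univ.filter (fun e : E => v ∈ ends e ∧ ends e ⊆ U)
              = E'.filter (fun e => v ∈ ends e) := by
            rw [hE', Finset.filter_filter]
            apply Finset.filter_congr
            intro e _
            simp [and_comm]
          rw [heq, Finset.card_eq_sum_ones, Finset.sum_filter]
        have hswap : ∑ v ∈ U, ∑ e ∈ E', (if v ∈ ends e then 1 else 0)
            = ∑ e ∈ E', ∑ v ∈ U, (if v ∈ ends e then 1 else 0) := Finset.sum_comm
        have hinner : ∀ e ∈ E', ∑ v ∈ U, (if v ∈ ends e then 1 else 0) = d := by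
          intro e he
          have hsub : ends e ⊆ U := (Finset.mem_filter.mp he).2
          rw [← Finset.sum_filter, Finset.filter_mem_eq_inter,
            Finset.inter_eq_right.mpr hsub, Finset.sum_const, smul_eq_mul, mul_one, hunif]
        calc ∑ v ∈ U, (Finset.univ.filter (fun e : E => v ∈ ends e ∧ ends e ⊆ U)).card
            = ∑ v ∈ U, ∑ e ∈ E', (if v ∈ ends e then 1 else 0) :=
              Finset.sum_congr rfl (fun v _ => hstep v)
          _ = ∑ e ∈ E', ∑ v ∈ U, (if v ∈ ends e then 1 else 0) := hswap
          _ = ∑ _e ∈ E', d := Finset.sum_congr rfl hinner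
          _ = d * E'.card := by rw [Finset.sum_const, smul_eq_mul, mul_comm]
      omega
    -- sum over E' is at most |U|
    have hsum : ∑ e ∈ E', (∑ v ∈ ends e, x v e) ≤ (U.card : ℝ) := by
      have hfix : ∀ e ∈ E', ∑ v ∈ ends e, x v e = ∑ v ∈ U, x v e := by
        intro e he
        have hsub : ends e ⊆ U := (Finset.mem_filter.mp he).2
        exact Finset.sum_subset hsub (fun v _ hv => hzero v e hv)
      calc ∑ e ∈ E', ∑ v ∈ ends e, x v e
          = ∑ e ∈ E', ∑ v ∈ U, x v e := Finset.sum_congr rfl hfix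
        _ = ∑ v ∈ U, ∑ e ∈ E', x v e := Finset.sum_comm
        _ ≤ ∑ v ∈ U, ∑ e : E, x v e := Finset.sum_le_sum (fun v _ =>
            Finset.sum_le_sum_of_subset_of_nonneg (Finset.subset_univ _)
              (fun e _ _ => hpos v e))
        _ ≤ ∑ _v ∈ U, 1 := Finset.sum_le_sum (fun v _ => hcap v)
        _ = (U.card : ℝ) := by rw [Finset.sum_const, nsmul_eq_mul, mul_one]
    have hbound : ∑ e ∈ E', (∑ v ∈ ends e, x v e) ≤ ∑ _e ∈ E', (d : ℝ) / kstar := by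
      rw [Finset.sum_const, nsmul_eq_mul]
      refine hsum.trans ?_
      have hc : (kstar : ℝ) * U.card ≤ (d : ℝ) * E'.card := by exact_mod_cast hcount
      rw [mul_div_assoc']
      rw [le_div_iff₀ hkpos]
      nlinarith
    obtain ⟨e, _, he⟩ := Finset.exists_le_of_sum_le ⟨e0, he0'⟩ hbound
    exact ⟨e, he⟩
end
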